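/- Work in the polynomial ring A = ℚ[H, L, S, c₁, c₂, c₃] and set Z₁ = H + 2L, Z₂ = H + 3L, Z₃ = S. Let F : A[E] → A be the A-linear map determined by F(1) = 1, F(E) = F(E²) = 0, and F(Eⁿ) = h_{n−3}(Z₁, Z₂, Z₃)·Z₁Z₂Z₃ for n ≥ 3; and let ν : ℚ[L, S, c₁, c₂, c₃][H] → ℚ[L, S, c₁, c₂, c₃] be the linear map over ℚ[L, S, c₁, c₂, c₃] determined by ν(1) = ν(H) = 0 and ν(H^k) = ((−2)^{k−1} − (−3)^{k−1})·L^{k−2} for k ≥ 2. Set c₂(TY) := (c₂ − c₁L + 12L²) + 3H² + 13HL + E·(−4H − 7L + S). Then ν(F(c₂(TY)²·(3H + 6L − 2E))) = 24L(c₂ − c₁L + 6L²) − 2S(7L − S)². (This is the paper's computation for the SU(2)-model: ∫_Y c₂(TY)² = 24∫_B L(c₂ − c₁L + 6L²) − 2∫_B S(7L − S)², exhibiting the correction μ_{A₁} = −2∫_B S(7L − S)² relative to the smooth Weierstrass model.) -/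
import Mathlib


namespace SU2ModelC2Squared

/-- The ring `ℚ[L, S, c₁, c₂, c₃]`: variables `0 ↦ L`, `1 ↦ S`, `2 ↦ c₁`, `3 ↦ c₂`, `4 ↦ c₃`. -/
noncomputable abbrev B : Type := MvPolynomial (Fin 5) ℚ

/-- The ring `A = ℚ[H, L, S, c₁, c₂, c₃]`, realized as `B[H]`. -/
noncomputable abbrev A : Type := Polynomial B

noncomputable def Lb : B := MvPolynomial.X 0
noncomputable def Sb : B := MvPolynomial.X 1
noncomputable def c₁b : B := MvPolynomial.X 2
noncomputable def c₂b : B := MvPolynomial.X 3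
noncomputable def c₃b : B := MvPolynomial.X 4

noncomputable def H : A := Polynomial.X
noncomputable def L : A := Polynomial.C Lb
noncomputable def S : A := Polynomial.C Sb
noncomputable def c₁ : A := Polynomial.C c₁b
noncomputable def c₂ : A := Polynomial.C c₂b

noncomputable def Z₁ : A := H + 2 * L
noncomputable def Z₂ : A := H + 3 * L
noncomputable def Z₃ : A := S

/-- Complete homogeneous symmetric polynomial `h_j(Z₁, Z₂, Z₃)`. -/
noncomputable def hcomp (j : ℕ) : A :=
  ∑ x ∈ Finset.Nat.antidiagonalTuple 3 j, (Z₁ ^ x 0 * Z₂ ^ x 1 * Z₃ ^ x 2)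

/-- The `A`-linear map `F : A[E] → A` determined by `F(1) = 1`, `F(E) = F(E²) = 0`, and
`F(Eⁿ) = h_{n−3}(Z₁, Z₂, Z₃)·Z₁Z₂Z₃` for `n ≥ 3`. -/
noncomputable def F (p : Polynomial A) : A :=
  p.sum fun n a =>
    a * if n = 0 then 1 else if n ≤ 2 then 0 else hcomp (n - 3) * (Z₁ * Z₂ * Z₃)

/-- The linear map `ν : B[H] → B` determined by `ν(1) = ν(H) = 0` and
`ν(H^k) = ((−2)^{k−1} − (−3)^{k−1})·L^{k−2}` for `k ≥ 2`. -/
noncomputable def ν (p : A) : B :=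
  p.sum fun k a =>
    a * if k ≤ 1 then 0 else ((-2 : B) ^ (k - 1) - (-3 : B) ^ (k - 1)) * Lb ^ (k - 2)

/-- `c₂(TY) = (c₂ − c₁L + 12L²) + 3H² + 13HL + E·(−4H − 7L + S)` as element of `A[E]`. -/
noncomputable def c₂TY : Polynomial A :=
  Polynomial.C ((c₂ - c₁ * L + 12 * L ^ 2) + 3 * H ^ 2 + 13 * H * L)
    + Polynomial.X * Polynomial.C (-4 * H - 7 * L + S)


-- Auxiliary lemmas -------------------------------------------------------

noncomputable def aa : A := (c₂ - c₁ * L + 12 * L ^ 2) + 3 * H ^ 2 + 13 * H * L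
noncomputable def bb : A := -4 * H - 7 * L + S
noncomputable def uu : A := 3 * H + 6 * L

lemma F_add (p q : Polynomial A) : F (p + q) = F p + F q := by
  unfold F
  apply Polynomial.sum_add_index
  · intro n; simp
  · intro n a b; ring

lemma F_mono (n : ℕ) (a : A) :
    F (Polynomial.C a * Polynomial.X ^ n) =
      a * if n = 0 then 1 else if n ≤ 2 then 0 else hcomp (n - 3) * (Z₁ * Z₂ * Z₃) := by
  unfold F
  rw [Polynomial.C_mul_X_pow_eq_monomial, Polynomial.sum_monomial_index]
  simp

lemma nu_add (p q : A) : ν (p + q) = ν p + ν q := by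
  unfold ν
  apply Polynomial.sum_add_index
  · intro n; simp
  · intro n a b; ring

lemma nu_mono (k : ℕ) (a : B) :
    ν (Polynomial.C a * Polynomial.X ^ k) =
      a * if k ≤ 1 then 0 else ((-2 : B) ^ (k - 1) - (-3 : B) ^ (k - 1)) * Lb ^ (k - 2) := by
  unfold ν
  rw [Polynomial.C_mul_X_pow_eq_monomial, Polynomial.sum_monomial_index]
  simp

lemma hcomp_zero : hcomp 0 = 1 := by
  unfold hcomp
  rw [Finset.Nat.antidiagonalTuple_zero_right]
  simp

lemma step1 :
    c₂TY ^ 2 * (Polynomial.C (3 * H + 6 * L) - 2 * Polynomial.X) =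
      Polynomial.C (aa ^ 2 * uu) + Polynomial.C (2 * aa * bb * uu - 2 * aa ^ 2) * Polynomial.X
        + Polynomial.C (bb ^ 2 * uu - 4 * aa * bb) * Polynomial.X ^ 2
        + Polynomial.C (-2 * bb ^ 2) * Polynomial.X ^ 3 := by
  unfold c₂TY aa bb uu
  simp only [map_add, map_sub, map_mul, map_pow, map_neg, map_ofNat]
  ring

noncomputable def q0 : B := 6*Lb*c₂b^2 - 12*Lb^2*c₁b*c₂b - 12*Lb^2*Sb^3 + 144*Lb^3*c₂b
  + 6*Lb^3*c₁b^2 + 168*Lb^3*Sb^2 - 144*Lb^4*c₁b - 588*Lb^4*Sb + 864*Lb^5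
noncomputable def q1 : B := 3*c₂b^2 - 6*Lb*c₁b*c₂b - 10*Lb*Sb^3 + 228*Lb^2*c₂b
  + 3*Lb^2*c₁b^2 + 236*Lb^2*Sb^2 - 228*Lb^3*c₁b - 1162*Lb^3*Sb + 2304*Lb^4
noncomputable def q2 : B := -2*Sb^3 + 114*Lb*c₂b + 108*Lb*Sb^2 - 114*Lb^2*c₁b
  - 850*Lb^2*Sb + 2382*Lb^3
noncomputable def q3 : B := 18*c₂b + 16*Sb^2 - 18*Lb*c₁b - 272*Lb*Sb + 1191*Lb^2
noncomputable def q4 : B := -32*Sb + 288*Lb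
noncomputable def q5 : B := 27

lemma step3 :
    aa ^ 2 * uu + (-2 * bb ^ 2) * (hcomp 0 * (Z₁ * Z₂ * Z₃)) =
      Polynomial.C q0 + Polynomial.C q1 * Polynomial.X + Polynomial.C q2 * Polynomial.X ^ 2
        + Polynomial.C q3 * Polynomial.X ^ 3 + Polynomial.C q4 * Polynomial.X ^ 4
        + Polynomial.C q5 * Polynomial.X ^ 5 := by
  rw [hcomp_zero]
  unfold aa bb uu Z₁ Z₂ Z₃ H L S c₁ c₂ q0 q1 q2 q3 q4 q5
  simp only [map_add, map_sub, map_mul, map_pow, map_neg, map_ofNat]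
  ring

/-- For the SU(2)-model,
`∫_Y c₂(TY)² = 24∫_B L(c₂ − c₁L + 6L²) − 2∫_B S(7L − S)²`. -/
theorem su2_c2_squared :
    ν (F (c₂TY ^ 2 * (Polynomial.C (3 * H + 6 * L) - 2 * Polynomial.X))) =
      24 * Lb * (c₂b - c₁b * Lb + 6 * Lb ^ 2) - 2 * Sb * (7 * Lb - Sb) ^ 2 := by
  rw [step1]
  rw [show Polynomial.C (aa ^ 2 * uu) = Polynomial.C (aa ^ 2 * uu) * Polynomial.X ^ 0 by simp,
    show Polynomial.C (2 * aa * bb * uu - 2 * aa ^ 2) * Polynomial.X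
      = Polynomial.C (2 * aa * bb * uu - 2 * aa ^ 2) * Polynomial.X ^ 1 by ring]
  rw [F_add, F_add, F_add, F_mono, F_mono, F_mono, F_mono]
  norm_num
  rw [step3]
  rw [show Polynomial.C q0 = Polynomial.C q0 * Polynomial.X ^ 0 by simp,
    show Polynomial.C q1 * Polynomial.X = Polynomial.C q1 * Polynomial.X ^ 1 by ring]
  rw [nu_add, nu_add, nu_add, nu_add, nu_add, nu_mono, nu_mono, nu_mono, nu_mono, nu_mono,
    nu_mono]
  norm_num [q2, q3, q4, q5]
  ring

end SU2ModelC2Squared
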